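/- arXiv:1908.01034 — 5 statements merged into one kernel-verified Lean document; each statement's English description precedes it below -/
import Mathlib

section
/- Let k be a positive natural number. For all real x with 0 < x < (2k+1)/(2k), the quantity -k·log x - (1/2)·log(1 - 2k(x-1)) is at most 2k²(x-1)²·(1/x + 1/(1 - 2k(x-1))). -/
theorem neg_log_bound_left (k : ℕ) (hk : 0 < k) (x : ℝ) (hx0 : 0 < x)
    (hx1 : x < (2 * (k : ℝ) + 1) / (2 * (k : ℝ))) :
    -(k : ℝ) * Real.log x - (1 / 2) * Real.log (1 - 2 * (k : ℝ) * (x - 1)) ≤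
      2 * (k : ℝ) ^ 2 * (x - 1) ^ 2 * (1 / x + 1 / (1 - 2 * (k : ℝ) * (x - 1))) := by
  have hk1 : (1:ℝ) ≤ (k:ℝ) := by exact_mod_cast hk
  have hkpos : (0:ℝ) < 2 * (k:ℝ) := by linarith
  have hy : 0 < 1 - 2 * (k:ℝ) * (x - 1) := by
    have h := (lt_div_iff₀ hkpos).mp hx1
    nlinarith
  have h1 : -Real.log x ≤ 1 / x - 1 := by
    have h := Real.log_le_sub_one_of_pos (show (0:ℝ) < x⁻¹ by positivity)
    rw [Real.log_inv] at h
    simpa [one_div] using h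
  have h2 : -Real.log (1 - 2 * (k:ℝ) * (x - 1)) ≤ 1 / (1 - 2 * (k:ℝ) * (x - 1)) - 1 := by
    have h := Real.log_le_sub_one_of_pos (show (0:ℝ) < (1 - 2 * (k:ℝ) * (x - 1))⁻¹ by positivity)
    rw [Real.log_inv] at h
    simpa [one_div] using h
  set y := 1 - 2 * (k:ℝ) * (x - 1) with hyd
  have key : (k:ℝ) * (1 / x - 1) + (1/2) * (1 / y - 1) ≤
      2 * (k:ℝ) ^ 2 * (x - 1) ^ 2 * (1 / x + 1 / y) := by
    rw [← sub_nonneg]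
    have e : 2 * (k:ℝ) ^ 2 * (x - 1) ^ 2 * (1 / x + 1 / y) -
        ((k:ℝ) * (1 / x - 1) + (1/2) * (1 / y - 1)) =
        ((2 * (k:ℝ)^2 * (x-1)^2 - k*(1-x)) * y + (2 * (k:ℝ)^2 * (x-1)^2 - k*(x-1)) * x)
          / (x * y) := by
      field_simp
      ring_nf
      rw [hyd]
      ring
    rw [e]
    apply div_nonneg _ (by positivity)
    have hpos : 0 ≤ (2 * (k:ℝ)^2 - k) * (x-1)^2 * y :=
      mul_nonneg (mul_nonneg (by nlinarith) (sq_nonneg _)) hy.le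
    rw [hyd] at hpos ⊢
    nlinarith [hpos]
  nlinarith [mul_le_mul_of_nonneg_left h1 (show (0:ℝ) ≤ k by linarith),
    mul_le_mul_of_nonneg_left h2 (show (0:ℝ) ≤ (1:ℝ)/2 by norm_num)]
end

section
/- Let k be a positive natural number. For all real x with x > (2k-1)/(2k), the quantity k·log x - (1/2)·log(1 - 2k(1-x)) is at most k²(1-x)²·(1 + 1/(1 - 2k(1-x))). -/
lemma log_le_aux (y : ℝ) (hy : 1 ≤ y) : Real.log y ≤ y / 2 - 1 / (2 * y) := by
  have hd : ∀ z : ℝ, 0 < z → HasDerivAt (fun y : ℝ => y / 2 - 1 / (2 * y) - Real.log y)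
      ((z - 1) ^ 2 / (2 * z ^ 2)) z := by
    intro z hz
    have h1 : HasDerivAt (fun y : ℝ => y / 2) (1 / 2) z := by
      simpa using (hasDerivAt_id z).div_const 2
    have h2 : HasDerivAt (fun y : ℝ => 2 * y) 2 z := by
      simpa using (hasDerivAt_id z).const_mul 2
    have h2' : HasDerivAt (fun y : ℝ => 1 / (2 * y)) (-(1 / (2 * z ^ 2))) z := by
      have := (hasDerivAt_const z (1 : ℝ)).div h2 (by positivity)
      refine this.congr_deriv ?_
      field_simp
      ring
    have h3 : HasDerivAt Real.log z⁻¹ z := Real.hasDerivAt_log (ne_of_gt hz)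
    have := (h1.sub h2').sub h3
    refine this.congr_deriv ?_
    field_simp
    ring
  have hmono : MonotoneOn (fun y : ℝ => y / 2 - 1 / (2 * y) - Real.log y) (Set.Ici 1) := by
    apply monotoneOn_of_hasDerivWithinAt_nonneg (f' := fun z => (z - 1) ^ 2 / (2 * z ^ 2))
      (convex_Ici 1)
    · intro z hz
      have hz0 : (0 : ℝ) < z := lt_of_lt_of_le zero_lt_one hz
      exact ((hd z hz0).continuousAt).continuousWithinAt
    · intro z hz
      rw [interior_Ici] at hz
      exact (hd z (lt_trans zero_lt_one hz)).hasDerivWithinAt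
    · intro z hz
      rw [interior_Ici] at hz
      have hz0 : (0 : ℝ) < z := lt_trans zero_lt_one hz
      positivity
  have h0 : (fun y : ℝ => y / 2 - 1 / (2 * y) - Real.log y) 1 ≤
      (fun y : ℝ => y / 2 - 1 / (2 * y) - Real.log y) y :=
    hmono (by simp) (by simpa using hy) hy
  simp only [Real.log_one] at h0
  norm_num at h0
  have hy0 : (0 : ℝ) < y := lt_of_lt_of_le zero_lt_one hy
  have e : y⁻¹ * (1 / 2) = 1 / (2 * y) := by
    rw [one_div 2, one_div (2 * y), mul_inv, mul_comm]
  linarith [h0, e.le, e.ge]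

theorem log_bound_right (k : ℕ) (hk : 0 < k) (x : ℝ)
    (hx : (2 * (k : ℝ) - 1) / (2 * (k : ℝ)) < x) :
    (k : ℝ) * Real.log x - (1 / 2) * Real.log (1 - 2 * (k : ℝ) * (1 - x)) ≤
      (k : ℝ) ^ 2 * (1 - x) ^ 2 * (1 + 1 / (1 - 2 * (k : ℝ) * (1 - x))) := by
  have hk1 : (1 : ℝ) ≤ (k : ℝ) := by exact_mod_cast hk
  have h2k : (0 : ℝ) < 2 * (k : ℝ) := by linarith
  rw [div_lt_iff₀ h2k] at hx
  set s : ℝ := 1 - 2 * (k : ℝ) * (1 - x) with hs_def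
  have hs : 0 < s := by rw [hs_def]; nlinarith
  have hsne : s ≠ 0 := ne_of_gt hs
  have hx0 : 0 < x := by nlinarith
  have hlogx : Real.log x ≤ x - 1 := Real.log_le_sub_one_of_pos hx0
  have hklog : (k : ℝ) * Real.log x ≤ (k : ℝ) * (x - 1) :=
    mul_le_mul_of_nonneg_left hlogx (by positivity)
  rcases le_or_gt x 1 with hx1 | hx1
  · -- x ≤ 1 : use tight bound -log s ≤ 1/(2s) - s/2
    have hinv : (1 : ℝ) ≤ 1 / s := by
      rw [le_div_iff₀ hs, hs_def]; nlinarith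
    have h := log_le_aux (1 / s) hinv
    rw [Real.log_div one_ne_zero hsne, Real.log_one] at h
    have e1 : 1 / s / 2 = 1 / (2 * s) := by rw [div_div, mul_comm]
    have e2 : 1 / (2 * (1 / s)) = s / 2 := by
      rw [one_div, one_div, mul_inv, inv_inv]; ring
    have h' : -Real.log s ≤ 1 / (2 * s) - s / 2 := by linarith [h, e1.le, e1.ge, e2.le, e2.ge]
    have key : (k : ℝ) ^ 2 * (1 - x) ^ 2 * (1 + 1 / s) -
        (-(k : ℝ) * (1 - x) + (1 / 2) * (1 / (2 * s) - s / 2)) = (k : ℝ) ^ 2 * (1 - x) ^ 2 := by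
      rw [hs_def]
      have hsne' : (1 : ℝ) - 2 * (k : ℝ) * (1 - x) ≠ 0 := by rw [← hs_def]; exact hsne
      have h2 : (1:ℝ) - (k:ℝ) * (1 - x) * 2 ≠ 0 := by convert hsne' using 1; ring
      field_simp
      ring
    have hsq : (0 : ℝ) ≤ (k : ℝ) ^ 2 * (1 - x) ^ 2 := by positivity
    linarith [hklog, h', key, hsq]
  · -- x > 1 : use -log s ≤ 1/s - 1
    have hinvpos : 0 < 1 / s := by positivity
    have h := Real.log_le_sub_one_of_pos hinvpos
    rw [Real.log_div one_ne_zero hsne, Real.log_one] at h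
    have key : (k : ℝ) ^ 2 * (1 - x) ^ 2 * (1 + 1 / s) -
        (-(k : ℝ) * (1 - x) + (1 / 2) * (1 / s - 1)) = -2 * (k : ℝ) ^ 3 * (1 - x) ^ 3 / s := by
      rw [hs_def]
      have hsne' : (1 : ℝ) - 2 * (k : ℝ) * (1 - x) ≠ 0 := by rw [← hs_def]; exact hsne
      have h2 : (1:ℝ) - (k:ℝ) * (1 - x) * 2 ≠ 0 := by convert hsne' using 1; ring
      field_simp
      ring
    have hnn : (0 : ℝ) ≤ -2 * (k : ℝ) ^ 3 * (1 - x) ^ 3 / s := by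
      apply div_nonneg _ hs.le
      have h1x : (1 - x) ≤ 0 := by linarith
      have h3 : (1 - x) ^ 3 ≤ 0 := by nlinarith [sq_nonneg (1 - x)]
      have hk3 : (0 : ℝ) ≤ (k : ℝ) ^ 3 := by positivity
      nlinarith [mul_nonneg hk3 (neg_nonneg.mpr h3)]
    linarith [hklog, h, key, hnn]
end

section
/- For a single-variable normalized Hermite polynomial H_n (satisfying E_{x~N(0,1)}[H_n(x)²] = 1), the fourth moment satisfies E_{x~N(0,1)}[H_n(x)^4] = Σ_{r=0}^{n} C(n,r)²·(2r)!/(r!)² and this is at most 9^n. -/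
open MeasureTheory ProbabilityTheory

open Polynomial Filter Real Set

noncomputable section

theorem derivHermite (n : ℕ) : derivative (hermite (n + 1)) = (n + 1) • hermite n := by
  induction n with
  | zero => simp [hermite_one, hermite_zero]
  | succ m ih =>
    rw [hermite_succ (m+1), derivative_sub, derivative_mul, derivative_X, one_mul, ih,
        derivative_smul, hermite_succ m]
    rw [show (X : Polynomial ℤ) * ((m+1) • hermite m) = (m+1) • (X * hermite m) from
      (mul_smul_comm _ _ _)]
    simp only [smul_sub, succ_nsmul, add_smul]
    abel

theorem coeffid (m n' i : ℕ) :
    (m+1).choose (i+1) * ((n'+1).choose (i+1)) * (i+1).factorial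
      = m.choose (i+1) * ((n'+1).choose (i+1)) * (i+1).factorial
        + (n'+1) * (m.choose i * n'.choose i * i.factorial) := by
  have h2 : (n'+1) * n'.choose i = (n'+1).choose (i+1) * (i+1) := Nat.add_one_mul_choose_eq n' i
  rw [Nat.choose_succ_succ, Nat.factorial_succ]
  have e : (m.choose i + m.choose (i+1)) * ((n'+1).choose (i+1)) * ((i+1) * i.factorial)
      = m.choose (i+1) * ((n'+1).choose (i+1)) * ((i+1) * i.factorial)
        + m.choose i * ((n'+1).choose (i+1) * (i+1)) * i.factorial := by ring
  rw [e, ← h2]; ring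

theorem hermiteMul (m : ℕ) : ∀ n : ℕ, hermite m * hermite n =
    ∑ k ∈ Finset.range (n+1),
      (m.choose k * n.choose k * k.factorial) • hermite (m + n - 2*k) := by
  induction m with
  | zero =>
    intro n
    rw [Finset.sum_eq_single 0]
    · simp [hermite_zero]
    · intro k _ hk
      simp [Nat.choose_eq_zero_of_lt (Nat.pos_of_ne_zero hk)]
    · intro h; exact absurd (Finset.mem_range.mpr (Nat.succ_pos n)) h
  | succ m ih =>
    intro n
    cases n with
    | zero => simp [hermite_zero]
    | succ n' =>
      have expand : hermite (m+1) * hermite (n'+1)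
          = (X * (hermite m * hermite (n'+1)) - derivative (hermite m * hermite (n'+1)))
            + hermite m * derivative (hermite (n'+1)) := by
        rw [hermite_succ m, derivative_mul]; ring
      rw [expand, derivHermite n', ih (n'+1), Finset.mul_sum, map_sum,
        ← Finset.sum_sub_distrib]
      have step1 : ∀ k ∈ Finset.range (n'+1+1),
          X * ((m.choose k * ((n'+1).choose k) * k.factorial) • hermite (m + (n'+1) - 2*k))
            - derivative ((m.choose k * ((n'+1).choose k) * k.factorial) • hermite (m + (n'+1) - 2*k))
          = (m.choose k * ((n'+1).choose k) * k.factorial) • hermite (m + (n'+1) - 2*k + 1) := by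
        intro k _
        rw [derivative_smul, mul_smul_comm, ← smul_sub, ← hermite_succ]
      rw [Finset.sum_congr rfl step1, mul_smul_comm, ih n', Finset.smul_sum]
      rw [Finset.sum_range_succ' (fun k =>
        (m.choose k * ((n'+1).choose k) * k.factorial) • hermite (m + (n'+1) - 2*k + 1)) (n'+1)]
      rw [Finset.sum_range_succ' (fun k =>
        ((m+1).choose k * ((n'+1).choose k) * k.factorial) • hermite (m + 1 + (n'+1) - 2*k)) (n'+1)]
      rw [add_right_comm, ← Finset.sum_add_distrib]
      congr 1
      · apply Finset.sum_congr rfl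
        intro i hi
        have hi' : i ≤ n' := Nat.lt_succ_iff.mp (Finset.mem_range.mp hi)
        rw [smul_smul]
        by_cases hm : m < i
        · have e1 : m.choose (i+1) = 0 := Nat.choose_eq_zero_of_lt (by omega)
          have e2 : m.choose i = 0 := Nat.choose_eq_zero_of_lt hm
          have e3 : (m+1).choose (i+1) = 0 := Nat.choose_eq_zero_of_lt (by omega)
          simp [e1, e2, e3]
        · push_neg at hm
          by_cases hJ : 2*(i+1) ≤ m + (n'+1)
          · have e1 : m + (n'+1) - 2*(i+1) + 1 = m + n' - 2*i := by omega
            have e3 : m + 1 + (n'+1) - 2*(i+1) = m + n' - 2*i := by omega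
            rw [e1, e3, ← add_smul]
            congr 1
            exact (coeffid m n' i).symm
          · have him : i = m ∧ i = n' := by omega
            obtain ⟨him1, him2⟩ := him
            have e1 : m.choose (i+1) = 0 := Nat.choose_eq_zero_of_lt (by omega)
            have e3 : m + 1 + (n'+1) - 2*(i+1) = m + n' - 2*i := by omega
            rw [e1, e3]
            simp only [zero_mul, zero_smul, zero_add]
            congr 1
            have := coeffid m n' i
            rw [e1] at this
            simp only [zero_mul, zero_add] at this
            exact this.symm
      · simp only [Nat.choose_zero_right, Nat.factorial_zero, mul_one, one_mul, one_smul,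
          Nat.mul_zero, Nat.sub_zero]
        congr 1
        omega

theorem hermiteSq (n : ℕ) : hermite n * hermite n
    = ∑ r ∈ Finset.range (n+1), ((n.choose r)^2 * (n-r).factorial) • hermite (2*r) := by
  rw [hermiteMul n n, ← Finset.sum_range_reflect
    (fun r => ((n.choose r)^2 * (n-r).factorial) • hermite (2*r)) (n+1)]
  apply Finset.sum_congr rfl
  intro k hk
  have hk' : k ≤ n := Nat.lt_succ_iff.mp (Finset.mem_range.mp hk)
  have e1 : n + 1 - 1 - k = n - k := by omega
  rw [e1, Nat.choose_symm hk']
  have e2 : n - (n - k) = k := by omega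
  have e3 : 2 * (n - k) = n + n - 2*k := by omega
  rw [e2, e3, sq]

-- monomial integrability against gaussian kernel
theorem integrable_monomial_gauss (k : ℕ) :
    Integrable (fun x : ℝ => x ^ k * Real.exp (-x^2/2)) := by
  have hcont : Continuous (fun x : ℝ => x ^ k * Real.exp (-x^2/2)) := by
    fun_prop
  refine Integrable.mono' ((integrable_exp_neg_mul_sq (by norm_num : (0:ℝ) < 1/4)).const_mul
    ((k.factorial : ℝ) * Real.exp 1)) hcont.aestronglyMeasurable ?_
  filter_upwards with x
  have h1 : |x| ^ k ≤ (k.factorial : ℝ) * Real.exp |x| := by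
    have h2 : |x| ^ k / (k.factorial : ℝ) ≤ Real.exp |x| := by
      calc |x| ^ k / (k.factorial : ℝ)
          ≤ ∑ i ∈ Finset.range (k+1), |x| ^ i / (i.factorial : ℝ) := by
            refine Finset.single_le_sum (f := fun i => |x| ^ i / (i.factorial : ℝ)) ?_ ?_
            · intro i _; positivity
            · simp
        _ ≤ Real.exp |x| := Real.sum_le_exp_of_nonneg (abs_nonneg x) _
    have hf : (0:ℝ) < k.factorial := by positivity
    rw [div_le_iff₀ hf] at h2
    linarith [h2]
  have h3 : Real.exp |x| * Real.exp (-x^2/2) ≤ Real.exp 1 * Real.exp (-(1/4) * x^2) := by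
    rw [← Real.exp_add, ← Real.exp_add]
    apply Real.exp_le_exp.mpr
    nlinarith [sq_nonneg (|x| - 2), sq_abs x, abs_nonneg x]
  have he : (0:ℝ) < Real.exp (-x^2/2) := Real.exp_pos _
  calc ‖x ^ k * Real.exp (-x^2/2)‖ = |x| ^ k * Real.exp (-x^2/2) := by
        rw [norm_mul, norm_pow, Real.norm_eq_abs, Real.norm_eq_abs,
          abs_of_pos he]
    _ ≤ ((k.factorial : ℝ) * Real.exp |x|) * Real.exp (-x^2/2) := by
        apply mul_le_mul_of_nonneg_right h1 he.le
    _ = (k.factorial : ℝ) * (Real.exp |x| * Real.exp (-x^2/2)) := by ring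
    _ ≤ (k.factorial : ℝ) * (Real.exp 1 * Real.exp (-(1/4) * x^2)) := by
        apply mul_le_mul_of_nonneg_left h3 (by positivity)
    _ = (k.factorial : ℝ) * Real.exp 1 * Real.exp (-(1/4) * x^2) := by ring

theorem integrable_aeval_gauss (p : Polynomial ℤ) :
    Integrable (fun x : ℝ => (aeval x p : ℝ) * Real.exp (-x^2/2)) := by
  have : ∀ x : ℝ, (aeval x p : ℝ) * Real.exp (-x^2/2)
      = ∑ i ∈ Finset.range (p.natDegree + 1),
          (p.coeff i : ℝ) * (x ^ i * Real.exp (-x^2/2)) := by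
    intro x
    rw [aeval_eq_sum_range, Finset.sum_mul]
    congr 1; ext i
    rw [zsmul_eq_mul]; push_cast; ring
  rw [show (fun x : ℝ => (aeval x p : ℝ) * Real.exp (-x^2/2)) = fun x =>
      ∑ i ∈ Finset.range (p.natDegree + 1), (p.coeff i : ℝ) * (x ^ i * Real.exp (-x^2/2))
    from funext this]
  exact integrable_finset_sum _ (fun i _ => (integrable_monomial_gauss i).const_mul _)

-- tendsto zero at infinity
theorem tendsto_aeval_gauss_atTop (p : Polynomial ℤ) :
    Tendsto (fun x : ℝ => (aeval x p : ℝ) * Real.exp (-x^2/2)) atTop (nhds 0) := by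
  set Q : Polynomial ℝ := p.map (Int.castRingHom ℝ) with hQ
  have haev : ∀ x : ℝ, (aeval x p : ℝ) = Q.eval x := by
    intro x; rw [hQ, aeval_def, eval₂_eq_eval_map]; norm_num [Polynomial.eval_map]
  have hT : Tendsto (fun x : ℝ => Real.exp 1 * ((Q*Q + 1).eval x / Real.exp x)) atTop (nhds 0) := by
    have := (Q*Q+1).tendsto_div_exp_atTop
    simpa using this.const_mul (Real.exp 1)
  apply squeeze_zero_norm _ hT
  intro x
  have h1 : |Q.eval x| ≤ (Q*Q+1).eval x := by
    simp only [eval_add, eval_mul, eval_one]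
    nlinarith [sq_nonneg (|Q.eval x| - 1), sq_abs (Q.eval x)]
  have h2 : Real.exp (-x^2/2) ≤ Real.exp 1 * Real.exp (-x) := by
    rw [← Real.exp_add]
    apply Real.exp_le_exp.mpr
    nlinarith [sq_nonneg (x - 1)]
  have he : (0:ℝ) < Real.exp (-x^2/2) := Real.exp_pos _
  have h0 : (0:ℝ) ≤ (Q*Q+1).eval x := le_trans (abs_nonneg _) h1
  calc ‖(aeval x p : ℝ) * Real.exp (-x^2/2)‖ = |Q.eval x| * Real.exp (-x^2/2) := by
        rw [haev, norm_mul, Real.norm_eq_abs, Real.norm_eq_abs, abs_of_pos he]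
    _ ≤ (Q*Q+1).eval x * (Real.exp 1 * Real.exp (-x)) := by
        apply mul_le_mul h1 h2 he.le h0
    _ = Real.exp 1 * ((Q*Q+1).eval x / Real.exp x) := by
        rw [Real.exp_neg]; ring

theorem tendsto_aeval_gauss_atBot (p : Polynomial ℤ) :
    Tendsto (fun x : ℝ => (aeval x p : ℝ) * Real.exp (-x^2/2)) atBot (nhds 0) := by
  have h := tendsto_aeval_gauss_atTop (p.comp (-X))
  have hc : ∀ x : ℝ, (aeval x (p.comp (-X)) : ℝ) = aeval (-x) p := by
    intro x; rw [aeval_comp]; simp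
  have h2 : Tendsto (fun x : ℝ => (aeval (-x) p : ℝ) * Real.exp (-(-x)^2/2)) atTop (nhds 0) := by
    apply h.congr
    intro x; rw [hc]; ring_nf
  have h3 := h2.comp tendsto_neg_atBot_atTop
  apply h3.congr
  intro x
  simp [Function.comp]

-- derivative of p(x) exp(-x²/2)
theorem hasDerivAt_aeval_gauss (p : Polynomial ℤ) (x : ℝ) :
    HasDerivAt (fun y : ℝ => (aeval y p : ℝ) * Real.exp (-y^2/2))
      (((aeval x (derivative p) : ℝ) - x * aeval x p) * Real.exp (-x^2/2)) x := by
  have h1 : HasDerivAt (fun y : ℝ => (aeval y p : ℝ)) (aeval x (derivative p) : ℝ) x :=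
    Polynomial.hasDerivAt_aeval (q := p) x
  have h2 : HasDerivAt (fun y : ℝ => -y^2/2) (-x) x := by
    have := ((hasDerivAt_pow 2 x).neg).div_const 2
    exact this.congr_deriv (by push_cast; ring)
  have h3 : HasDerivAt (fun y : ℝ => Real.exp (-y^2/2)) (Real.exp (-x^2/2) * (-x)) x :=
    h2.exp
  have := h1.mul h3
  exact this.congr_deriv (by ring)

-- FTC: integral of d/dx (p e^{-x²/2}) over ℝ is zero
theorem integral_deriv_gauss_zero (p : Polynomial ℤ) :
    ∫ x : ℝ, ((aeval x (derivative p) : ℝ) - x * aeval x p) * Real.exp (-x^2/2) = 0 := by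
  set f : ℝ → ℝ := fun x => (aeval x p : ℝ) * Real.exp (-x^2/2) with hf
  set g : ℝ → ℝ := fun x => ((aeval x (derivative p) : ℝ) - x * aeval x p) * Real.exp (-x^2/2)
    with hg
  have hgq : g = fun x => (aeval x (derivative p - X * p) : ℝ) * Real.exp (-x^2/2) := by
    funext x; simp [hg]
  have hint : Integrable g := by rw [hgq]; exact integrable_aeval_gauss _
  have hIic : ∫ x in Iic (0:ℝ), g x = f 0 - 0 :=
    integral_Iic_of_hasDerivAt_of_tendsto' (fun x _ => hasDerivAt_aeval_gauss p x)
      hint.integrableOn (tendsto_aeval_gauss_atBot p)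
  have hIoi : ∫ x in Ioi (0:ℝ), g x = 0 - f 0 :=
    integral_Ioi_of_hasDerivAt_of_tendsto' (fun x _ => hasDerivAt_aeval_gauss p x)
      hint.integrableOn (tendsto_aeval_gauss_atTop p)
  have := intervalIntegral.integral_Iic_add_Ioi (b := (0:ℝ)) hint.integrableOn hint.integrableOn
  rw [hIic, hIoi] at this
  show ∫ x : ℝ, g x = 0
  rw [← this]; ring


theorem gpdf_eq : gaussianPDFReal 0 1
    = fun x => (Real.sqrt (2*Real.pi))⁻¹ * Real.exp (-x^2/2) := by
  funext x
  rw [gaussianPDFReal_def]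
  norm_num

theorem integral_gaussianReal_eq (g : ℝ → ℝ) :
    ∫ x, g x ∂(gaussianReal 0 1) = ∫ x, gaussianPDFReal 0 1 x * g x := by
  rw [gaussianReal_of_var_ne_zero 0 one_ne_zero]
  have hmeas : Measurable (fun x => (gaussianPDFReal 0 1 x).toNNReal) :=
    (measurable_gaussianPDFReal 0 1).real_toNNReal
  have h := integral_withDensity_eq_integral_smul (μ := volume) hmeas g
  have hd : (gaussianPDF 0 1) = fun x => ((gaussianPDFReal 0 1 x).toNNReal : ENNReal) := by
    funext x; rw [gaussianPDF_def]; rfl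
  rw [hd, h]
  congr 1
  funext x
  rw [NNReal.smul_def, smul_eq_mul, Real.coe_toNNReal _ (gaussianPDFReal_nonneg 0 1 x)]

theorem integrable_aeval_gaussianReal (p : Polynomial ℤ) :
    Integrable (fun x => (aeval x p : ℝ)) (gaussianReal 0 1) := by
  rw [gaussianReal_of_var_ne_zero 0 one_ne_zero]
  have hmeas : Measurable (fun x => (gaussianPDFReal 0 1 x).toNNReal) :=
    (measurable_gaussianPDFReal 0 1).real_toNNReal
  have hd : (gaussianPDF 0 1) = fun x => ((gaussianPDFReal 0 1 x).toNNReal : ENNReal) := by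
    funext x; rw [gaussianPDF_def]; rfl
  rw [hd, integrable_withDensity_iff_integrable_smul hmeas]
  have : (fun x => (gaussianPDFReal 0 1 x).toNNReal • (aeval x p : ℝ))
      = fun x => (Real.sqrt (2*Real.pi))⁻¹ * ((aeval x p : ℝ) * Real.exp (-x^2/2)) := by
    funext x
    rw [NNReal.smul_def, smul_eq_mul, Real.coe_toNNReal _ (gaussianPDFReal_nonneg 0 1 x), gpdf_eq]
    ring
  rw [this]
  exact (integrable_aeval_gauss p).const_mul _

theorem E_eq (p : Polynomial ℤ) : ∫ x, (aeval x p : ℝ) ∂(gaussianReal 0 1)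
    = (Real.sqrt (2*Real.pi))⁻¹ * ∫ x, (aeval x p : ℝ) * Real.exp (-x^2/2) := by
  rw [integral_gaussianReal_eq, gpdf_eq, ← integral_const_mul]
  congr 1; funext x; ring

theorem E_sum {ι : Type*} (s : Finset ι) (f : ι → Polynomial ℤ) :
    ∫ x, (aeval x (∑ i ∈ s, f i) : ℝ) ∂(gaussianReal 0 1)
      = ∑ i ∈ s, ∫ x, (aeval x (f i) : ℝ) ∂(gaussianReal 0 1) := by
  have h1 : (fun x => (aeval x (∑ i ∈ s, f i) : ℝ))
      = fun x => ∑ i ∈ s, (aeval x (f i) : ℝ) := by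
    funext x; rw [map_sum]
  rw [h1]
  exact integral_finset_sum s (fun i _ => integrable_aeval_gaussianReal (f i))

theorem E_sub (p q : Polynomial ℤ) :
    ∫ x, (aeval x (p - q) : ℝ) ∂(gaussianReal 0 1)
      = (∫ x, (aeval x p : ℝ) ∂(gaussianReal 0 1))
        - ∫ x, (aeval x q : ℝ) ∂(gaussianReal 0 1) := by
  have h1 : (fun x => (aeval x (p - q) : ℝ))
      = fun x => (aeval x p : ℝ) - (aeval x q : ℝ) := by
    funext x; rw [map_sub]
  rw [h1]
  exact integral_sub (integrable_aeval_gaussianReal p) (integrable_aeval_gaussianReal q)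

theorem E_add (p q : Polynomial ℤ) :
    ∫ x, (aeval x (p + q) : ℝ) ∂(gaussianReal 0 1)
      = (∫ x, (aeval x p : ℝ) ∂(gaussianReal 0 1))
        + ∫ x, (aeval x q : ℝ) ∂(gaussianReal 0 1) := by
  have h1 : (fun x => (aeval x (p + q) : ℝ))
      = fun x => (aeval x p : ℝ) + (aeval x q : ℝ) := by
    funext x; rw [map_add]
  rw [h1]
  exact integral_add (integrable_aeval_gaussianReal p) (integrable_aeval_gaussianReal q)

theorem E_nsmul (k : ℕ) (p : Polynomial ℤ) :
    ∫ x, (aeval x (k • p) : ℝ) ∂(gaussianReal 0 1)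
      = k * ∫ x, (aeval x p : ℝ) ∂(gaussianReal 0 1) := by
  have h1 : (fun x => (aeval x (k • p) : ℝ)) = fun x => (k : ℝ) * (aeval x p : ℝ) := by
    funext x; rw [map_nsmul, nsmul_eq_mul]
  rw [h1, integral_const_mul]

theorem E_one : ∫ x, (aeval x (1 : Polynomial ℤ) : ℝ) ∂(gaussianReal 0 1) = 1 := by
  simp [map_one]

theorem stein (p : Polynomial ℤ) :
    ∫ x, (aeval x (X * p) : ℝ) ∂(gaussianReal 0 1)
      = ∫ x, (aeval x (derivative p) : ℝ) ∂(gaussianReal 0 1) := by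
  have h0 := integral_deriv_gauss_zero p
  have h1 : ∫ x, (aeval x (derivative p - X * p) : ℝ) ∂(gaussianReal 0 1) = 0 := by
    rw [E_eq]
    have h2 : (fun x => (aeval x (derivative p - X * p) : ℝ) * Real.exp (-x^2/2))
        = fun x => ((aeval x (derivative p) : ℝ) - x * (aeval x p : ℝ)) * Real.exp (-x^2/2) := by
      funext x; rw [map_sub, map_mul, aeval_X]
    rw [h2, h0, mul_zero]
  rw [E_sub] at h1
  linarith

end
theorem keystep (a : ℕ) (q : Polynomial ℤ) :
    ∫ x, (aeval x (hermite (a+1) * q) : ℝ) ∂(gaussianReal 0 1)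
      = ∫ x, (aeval x (hermite a * derivative q) : ℝ) ∂(gaussianReal 0 1) := by
  have hpoly : hermite (a+1) * q
      = (X * (hermite a * q) - derivative (hermite a * q)) + hermite a * derivative q := by
    rw [hermite_succ, derivative_mul]; ring
  rw [hpoly, E_add, E_sub, stein (hermite a * q)]
  ring

theorem Ezero (c : ℕ) : ∫ x, (aeval x (hermite (c+1)) : ℝ) ∂(gaussianReal 0 1) = 0 := by
  rw [hermite_succ c, E_sub, stein]
  ring

theorem orth : ∀ a b : ℕ, ∫ x, (aeval x (hermite a * hermite b) : ℝ) ∂(gaussianReal 0 1)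
    = if a = b then (a.factorial : ℝ) else 0 := by
  intro a
  induction a with
  | zero =>
    intro b
    cases b with
    | zero =>
      have h : hermite 0 * hermite 0 = (1 : Polynomial ℤ) := by rw [hermite_zero]; simp
      rw [h, E_one]; simp
    | succ b' =>
      have h : hermite 0 * hermite (b'+1) = hermite (b'+1) := by rw [hermite_zero]; simp
      rw [h, Ezero b', if_neg (by omega)]
  | succ a' ih =>
    intro b
    rw [keystep]
    cases b with
    | zero =>
      have h : hermite a' * derivative (hermite 0) = 0 := by rw [hermite_zero]; simp
      rw [h]
      simp
    | succ b' =>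
      rw [derivHermite b', mul_smul_comm, E_nsmul, ih b']
      by_cases h : a' = b'
      · subst h
        rw [if_pos rfl, if_pos rfl]
        push_cast [Nat.factorial_succ]
        ring
      · rw [if_neg h, if_neg (by omega)]
        ring

theorem fourth (n : ℕ) :
    ∫ x, (aeval x ((hermite n * hermite n) * (hermite n * hermite n)) : ℝ) ∂(gaussianReal 0 1)
      = ∑ r ∈ Finset.range (n+1),
          ((((n.choose r)^2 * (n-r).factorial : ℕ) : ℝ))^2 * ((2*r).factorial : ℝ) := by
  rw [hermiteSq n, Finset.sum_mul_sum, E_sum]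
  apply Finset.sum_congr rfl
  intro r hr
  rw [E_sum, Finset.sum_eq_single r]
  · rw [smul_mul_smul_comm, E_nsmul, orth, if_pos rfl]
    push_cast
    ring
  · intro s _ hne
    rw [smul_mul_smul_comm, E_nsmul, orth, if_neg (by omega), mul_zero]
  · intro h; exact absurd hr h


theorem term_eq (n r : ℕ) (hr : r ≤ n) :
    ((((n.choose r)^2 * (n-r).factorial : ℕ) : ℝ))^2 * ((2*r).factorial : ℝ) / ((n.factorial : ℝ))^2
      = (n.choose r : ℝ)^2 * ((2*r).factorial : ℝ) / ((r.factorial : ℝ))^2 := by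
  have key : (n.choose r) * r.factorial * (n-r).factorial = n.factorial :=
    Nat.choose_mul_factorial_mul_factorial hr
  have keyR : (n.factorial : ℝ) = (n.choose r : ℝ) * r.factorial * (n-r).factorial := by
    exact_mod_cast key.symm
  have h1 : (r.factorial : ℝ) ≠ 0 := by positivity
  have h2 : (n.factorial : ℝ) ≠ 0 := by positivity
  field_simp
  rw [keyR]
  push_cast
  ring

theorem sum_eq (n : ℕ) :
    (∑ r ∈ Finset.range (n+1),
        ((((n.choose r)^2 * (n-r).factorial : ℕ) : ℝ))^2 * ((2*r).factorial : ℝ))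
      / ((n.factorial : ℝ))^2
      = ∑ r ∈ Finset.range (n+1),
          (n.choose r : ℝ)^2 * ((2*r).factorial : ℝ) / ((r.factorial : ℝ))^2 := by
  rw [Finset.sum_div]
  exact Finset.sum_congr rfl
    (fun r hr => term_eq n r (Nat.lt_succ_iff.mp (Finset.mem_range.mp hr)))

theorem ineq (n : ℕ) :
    (∑ r ∈ Finset.range (n+1), (n.choose r : ℝ)^2 * ((2*r).factorial : ℝ) / ((r.factorial : ℝ))^2)
      ≤ 9^n := by
  have hterm : ∀ r : ℕ, (n.choose r : ℝ)^2 * ((2*r).factorial : ℝ) / ((r.factorial : ℝ))^2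
      = (((n.choose r)^2 * (2*r).choose r : ℕ) : ℝ) := by
    intro r
    have key : (2*r).choose r * r.factorial * r.factorial = (2*r).factorial := by
      have h := Nat.choose_mul_factorial_mul_factorial (show r ≤ 2*r by omega)
      simpa [show 2*r - r = r by omega] using h
    have keyR : ((2*r).factorial : ℝ) = ((2*r).choose r : ℝ) * r.factorial * r.factorial := by
      exact_mod_cast key.symm
    have h1 : (r.factorial : ℝ) ≠ 0 := by positivity
    field_simp
    rw [keyR]
    push_cast
    ring
  rw [Finset.sum_congr rfl (fun r _ => hterm r), ← Nat.cast_sum]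
  have h3 : (∑ r ∈ Finset.range (n+1), n.choose r * 2^r) = 3^n := by
    have h := add_pow 2 1 n
    norm_num at h
    rw [h]
    exact Finset.sum_congr rfl (fun r _ => by ring)
  have hnat : (∑ r ∈ Finset.range (n+1), (n.choose r)^2 * (2*r).choose r) ≤ 9^n := by
    have hcb : ∀ r : ℕ, (2*r).choose r ≤ 4^r := by
      intro r
      calc (2*r).choose r ≤ ∑ k ∈ Finset.range (2*r+1), (2*r).choose k :=
            Finset.single_le_sum (f := fun k => (2*r).choose k) (fun _ _ => Nat.zero_le _)
              (Finset.mem_range.mpr (by omega))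
        _ = 2^(2*r) := Nat.sum_range_choose (2*r)
        _ = 4^r := by rw [pow_mul]; norm_num
    calc ∑ r ∈ Finset.range (n+1), (n.choose r)^2 * (2*r).choose r
        ≤ ∑ r ∈ Finset.range (n+1), (n.choose r * 2^r) * (n.choose r * 2^r) := by
          apply Finset.sum_le_sum
          intro r _
          calc (n.choose r)^2 * (2*r).choose r ≤ (n.choose r)^2 * 4^r :=
                Nat.mul_le_mul_left _ (hcb r)
            _ = (n.choose r * 2^r) * (n.choose r * 2^r) := by
                rw [show (4:ℕ) = 2^2 from rfl, ← pow_mul]; ring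
      _ ≤ ∑ r ∈ Finset.range (n+1), (n.choose r * 2^r) * 3^n := by
          apply Finset.sum_le_sum
          intro r hr
          apply Nat.mul_le_mul_left
          rw [← h3]
          exact Finset.single_le_sum (f := fun k => n.choose k * 2^k)
            (fun _ _ => Nat.zero_le _) hr
      _ = 3^n * 3^n := by rw [← Finset.sum_mul, h3]
      _ = 9^n := by rw [← mul_pow]; norm_num
  calc ((∑ r ∈ Finset.range (n+1), (n.choose r)^2 * (2*r).choose r : ℕ) : ℝ)
      ≤ ((9^n : ℕ) : ℝ) := Nat.cast_le.mpr hnat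
    _ = 9^n := by push_cast; ring

theorem normalized_hermite_fourth_moment (n : ℕ) :
    (∫ x, (((Polynomial.hermite n).aeval x : ℝ) / Real.sqrt (n.factorial)) ^ 4
        ∂(gaussianReal 0 1)) =
      ∑ r ∈ Finset.range (n + 1),
        (n.choose r : ℝ) ^ 2 * ((2 * r).factorial : ℝ) / ((r.factorial : ℝ) ^ 2) ∧
    (∑ r ∈ Finset.range (n + 1),
        (n.choose r : ℝ) ^ 2 * ((2 * r).factorial : ℝ) / ((r.factorial : ℝ) ^ 2)) ≤ 9 ^ n := by
  constructor
  · have hfun : (fun x => (((Polynomial.hermite n).aeval x : ℝ) / Real.sqrt (n.factorial)) ^ 4)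
        = fun x => (aeval x ((hermite n * hermite n) * (hermite n * hermite n)) : ℝ)
            / ((n.factorial : ℝ))^2 := by
      funext x
      rw [div_pow]
      congr 1
      · rw [show hermite n * hermite n * (hermite n * hermite n) = hermite n ^ 4 by ring,
          map_pow]
      · rw [show (4:ℕ) = 2*2 from rfl, pow_mul, Real.sq_sqrt (by positivity)]
    rw [hfun, integral_div, fourth n, sum_eq n]
  · exact ineq n
end

section
/- Let P and Q be probability measures on ℝ^d with everywhere positive densities, and ℓ: ℝ^d → ℝ a measurable function with ℓ² integrable under both. Then |E_P[ℓ] − E_Q[ℓ]| ≤ 2·√(E_P[ℓ²] + E_Q[ℓ²])·√(d_TV(P,Q)), where d_TV is the total variation distance. -/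
open MeasureTheory
open scoped ENNReal NNReal

lemma my_integral_withDensity_ofReal {α : Type*} [MeasurableSpace α] (μ : Measure α)
    {p : α → ℝ} (hp : Measurable p) (h0 : ∀ x, 0 ≤ p x) (g : α → ℝ) :
    ∫ x, g x ∂(μ.withDensity fun x => ENNReal.ofReal (p x)) = ∫ x, p x * g x ∂μ := by
  have h : (fun x => ENNReal.ofReal (p x)) = fun x => ((p x).toNNReal : ℝ≥0∞) := rfl
  rw [h, integral_withDensity_eq_integral_smul hp.real_toNNReal]
  congr 1; ext x
  simp [NNReal.smul_def, Real.coe_toNNReal _ (h0 x)]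

lemma my_integrable_withDensity_ofReal {α : Type*} [MeasurableSpace α] {μ : Measure α}
    {p : α → ℝ} (hp : Measurable p) (h0 : ∀ x, 0 ≤ p x) {g : α → ℝ}
    (hg : Integrable g (μ.withDensity fun x => ENNReal.ofReal (p x))) :
    Integrable (fun x => p x * g x) μ := by
  have h : (fun x => ENNReal.ofReal (p x)) = fun x => ((p x).toNNReal : ℝ≥0∞) := rfl
  rw [h, integrable_withDensity_iff_integrable_smul hp.real_toNNReal] at hg
  convert hg using 1
  ext x; simp [NNReal.smul_def, Real.coe_toNNReal _ (h0 x)]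

theorem expectation_diff_le_tv (d : ℕ) (P Q : Measure (Fin d → ℝ))
    [IsProbabilityMeasure P] [IsProbabilityMeasure Q]
    (p q : (Fin d → ℝ) → ℝ) (hp : Measurable p) (hq : Measurable q)
    (hppos : ∀ x, 0 < p x) (hqpos : ∀ x, 0 < q x)
    (hP : P = volume.withDensity fun x => ENNReal.ofReal (p x))
    (hQ : Q = volume.withDensity fun x => ENNReal.ofReal (q x))
    (ℓ : (Fin d → ℝ) → ℝ) (hℓ : Measurable ℓ)
    (hℓP : Integrable ℓ P) (hℓQ : Integrable ℓ Q)
    (hℓ2P : Integrable (fun x => ℓ x ^ 2) P) (hℓ2Q : Integrable (fun x => ℓ x ^ 2) Q) :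
    |(∫ x, ℓ x ∂P) - ∫ x, ℓ x ∂Q| ≤
      2 * Real.sqrt ((∫ x, ℓ x ^ 2 ∂P) + ∫ x, ℓ x ^ 2 ∂Q) *
        Real.sqrt ((1 / 2) * ∫ x, |p x - q x|) := by
  have hp0 : ∀ x, 0 ≤ p x := fun x => (hppos x).le
  have hq0 : ∀ x, 0 ≤ q x := fun x => (hqpos x).le
  -- p and q are integrable (they integrate to 1)
  have hPuniv : ∫⁻ x, ENNReal.ofReal (p x) = 1 := by
    have h := measure_univ (μ := P)
    rwa [hP, withDensity_apply _ MeasurableSet.univ, setLIntegral_univ] at h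
  have hQuniv : ∫⁻ x, ENNReal.ofReal (q x) = 1 := by
    have h := measure_univ (μ := Q)
    rwa [hQ, withDensity_apply _ MeasurableSet.univ, setLIntegral_univ] at h
  have hpint : Integrable p := by
    refine ⟨hp.aestronglyMeasurable, ?_⟩
    rw [hasFiniteIntegral_iff_ofReal (Filter.Eventually.of_forall hp0), hPuniv]
    exact ENNReal.one_lt_top
  have hqint : Integrable q := by
    refine ⟨hq.aestronglyMeasurable, ?_⟩
    rw [hasFiniteIntegral_iff_ofReal (Filter.Eventually.of_forall hq0), hQuniv]
    exact ENNReal.one_lt_top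
  -- transfer integrability to volume
  have hlp : Integrable (fun x => p x * ℓ x) := by
    refine my_integrable_withDensity_ofReal hp hp0 ?_; rwa [← hP]
  have hlq : Integrable (fun x => q x * ℓ x) := by
    refine my_integrable_withDensity_ofReal hq hq0 ?_; rwa [← hQ]
  have hlp2 : Integrable (fun x => p x * ℓ x ^ 2) := by
    refine my_integrable_withDensity_ofReal hp hp0 ?_; rwa [← hP]
  have hlq2 : Integrable (fun x => q x * ℓ x ^ 2) := by
    refine my_integrable_withDensity_ofReal hq hq0 ?_; rwa [← hQ]
  -- rewrite the four integrals wrt P, Q as integrals wrt volume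
  rw [hP, hQ, my_integral_withDensity_ofReal _ hp hp0, my_integral_withDensity_ofReal _ hq hq0,
    my_integral_withDensity_ofReal _ hp hp0, my_integral_withDensity_ofReal _ hq hq0]
  -- the two Cauchy-Schwarz factors
  set F : (Fin d → ℝ) → ℝ := fun x => |ℓ x| * Real.sqrt (p x + q x) with hF_def
  set G : (Fin d → ℝ) → ℝ := fun x => Real.sqrt |p x - q x| with hG_def
  have hFmeas : Measurable F := hℓ.abs.mul (hp.add hq).sqrt
  have hGmeas : Measurable G := (hp.sub hq).abs.sqrt
  have hF0 : ∀ x, 0 ≤ F x := fun x => mul_nonneg (abs_nonneg _) (Real.sqrt_nonneg _)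
  have hG0 : ∀ x, 0 ≤ G x := fun x => Real.sqrt_nonneg _
  have hF2eq : ∀ x, F x ^ 2 = p x * ℓ x ^ 2 + q x * ℓ x ^ 2 := by
    intro x
    rw [hF_def]
    rw [mul_pow, Real.sq_sqrt (add_nonneg (hp0 x) (hq0 x)), sq_abs]
    ring
  have hG2eq : ∀ x, G x ^ 2 = |p x - q x| := fun x =>
    Real.sq_sqrt (abs_nonneg _)
  have hF2 : Integrable (fun x => F x ^ 2) := by
    refine (hlp2.add hlq2).congr ?_
    exact Filter.Eventually.of_forall fun x => (hF2eq x).symm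
  have hG2 : Integrable (fun x => G x ^ 2) := by
    refine (hpint.sub hqint).abs.congr ?_
    exact Filter.Eventually.of_forall fun x => (hG2eq x).symm
  have hFmem : MemLp F 2 volume :=
    (memLp_two_iff_integrable_sq hFmeas.aestronglyMeasurable).mpr hF2
  have hGmem : MemLp G 2 volume :=
    (memLp_two_iff_integrable_sq hGmeas.aestronglyMeasurable).mpr hG2
  have hFG : Integrable (fun x => F x * G x) := by
    refine Integrable.mono' ((hF2.add hG2).div_const 2)
      (hFmeas.mul hGmeas).aestronglyMeasurable ?_
    refine Filter.Eventually.of_forall fun x => ?_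
    rw [Real.norm_of_nonneg (mul_nonneg (hF0 x) (hG0 x))]
    simp only [Pi.add_apply]
    nlinarith [sq_nonneg (F x - G x)]
  -- Cauchy–Schwarz
  have hCS : ∫ x, F x * G x ≤
      Real.sqrt (∫ x, F x ^ 2) * Real.sqrt (∫ x, G x ^ 2) := by
    have hconj : Real.HolderConjugate 2 2 := Real.HolderConjugate.two_two
    have h2 : ENNReal.ofReal (2 : ℝ) = 2 := by norm_num
    have := integral_mul_le_Lp_mul_Lq_of_nonneg hconj
      (Filter.Eventually.of_forall hF0) (Filter.Eventually.of_forall hG0)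
      (h2 ▸ hFmem) (h2 ▸ hGmem)
    rw [Real.sqrt_eq_rpow, Real.sqrt_eq_rpow]
    simpa using this
  -- pointwise bound
  have hpw : ∀ x, |p x * ℓ x - q x * ℓ x| ≤ F x * G x := by
    intro x
    have h1 : |p x * ℓ x - q x * ℓ x| = |ℓ x| * |p x - q x| := by
      rw [show p x * ℓ x - q x * ℓ x = ℓ x * (p x - q x) by ring, abs_mul]
    rw [h1, hF_def, hG_def, mul_assoc]
    refine mul_le_mul_of_nonneg_left ?_ (abs_nonneg _)
    have h2 : |p x - q x| = Real.sqrt |p x - q x| * Real.sqrt |p x - q x| :=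
      (Real.mul_self_sqrt (abs_nonneg _)).symm
    rw [h2]
    refine mul_le_mul_of_nonneg_right ?_ (Real.sqrt_nonneg _)
    refine Real.sqrt_le_sqrt ?_
    calc |p x - q x| ≤ |p x| + |q x| := abs_sub _ _
      _ = p x + q x := by rw [abs_of_nonneg (hp0 x), abs_of_nonneg (hq0 x)]
  -- values of ∫ F², ∫ G²
  have hFint : ∫ x, F x ^ 2 = (∫ x, p x * ℓ x ^ 2) + ∫ x, q x * ℓ x ^ 2 := by
    rw [← integral_add hlp2 hlq2]
    exact integral_congr_ae (Filter.Eventually.of_forall hF2eq)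
  have hGint : ∫ x, G x ^ 2 = ∫ x, |p x - q x| := by
    exact integral_congr_ae (Filter.Eventually.of_forall hG2eq)
  set S := (∫ x, p x * ℓ x ^ 2) + ∫ x, q x * ℓ x ^ 2 with hS_def
  set T := ∫ x, |p x - q x| with hT_def
  have hT0 : 0 ≤ T := integral_nonneg fun x => abs_nonneg _
  calc |(∫ x, p x * ℓ x) - ∫ x, q x * ℓ x|
      = |∫ x, (p x * ℓ x - q x * ℓ x)| := by rw [integral_sub hlp hlq]
    _ ≤ ∫ x, |p x * ℓ x - q x * ℓ x| := by
        simpa [Real.norm_eq_abs] using norm_integral_le_integral_norm fun x => p x * ℓ x - q x * ℓ x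
    _ ≤ ∫ x, F x * G x :=
        integral_mono (hlp.sub hlq).abs hFG hpw
    _ ≤ Real.sqrt (∫ x, F x ^ 2) * Real.sqrt (∫ x, G x ^ 2) := hCS
    _ = Real.sqrt S * Real.sqrt T := by rw [hFint, hGint]
    _ ≤ Real.sqrt S * (2 * Real.sqrt ((1 / 2) * T)) := by
        refine mul_le_mul_of_nonneg_left ?_ (Real.sqrt_nonneg _)
        rw [Real.sqrt_mul (by norm_num : (0:ℝ) ≤ 1 / 2)]
        have hhalf : (1 / 2 : ℝ) ≤ Real.sqrt (1 / 2) := by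
          have h1 : Real.sqrt (1 / 4) ≤ Real.sqrt (1 / 2) := Real.sqrt_le_sqrt (by norm_num)
          rwa [show (1 / 4 : ℝ) = (1 / 2) ^ 2 by norm_num,
            Real.sqrt_sq (by norm_num : (0:ℝ) ≤ 1 / 2)] at h1
        nlinarith [Real.sqrt_nonneg T]
    _ = 2 * Real.sqrt S * Real.sqrt ((1 / 2) * T) := by ring
end

section
/- Let N₁ = N(0, I_d) and N₂ = N(μ, Λ) with Λ = diag(λ₁,...,λ_d), λᵢ > 0. Define N = N(0, R) with R = diag(max(1,λ₁),...,max(1,λ_d)). Then the chi-squared divergences satisfy χ²(N₂‖N) ≤ exp(2‖Λ^{-1/2}μ‖₂² + ‖Λ⁻¹ − I‖_F²) − 1 and χ²(N₁‖N) ≤ exp((1/2)·max(1,‖Λ‖₂)·‖Λ⁻¹ − I‖_F²) − 1. In particular both divergences are finite. -/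
open MeasureTheory Real

lemma le_of_sq_le_sq' {x y : ℝ} (hx : 0 ≤ x) (hy : 0 ≤ y) (h : x ^ 2 ≤ y ^ 2) : x ≤ y := by
  calc x = Real.sqrt (x ^ 2) := (Real.sqrt_sq hx).symm
  _ ≤ Real.sqrt (y ^ 2) := Real.sqrt_le_sqrt h
  _ = y := Real.sqrt_sq hy

lemma eq_of_sq_eq_sq' {x y : ℝ} (hx : 0 ≤ x) (hy : 0 ≤ y) (h : x ^ 2 = y ^ 2) : x = y := by
  rw [← Real.sqrt_sq hx, ← Real.sqrt_sq hy, h]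

lemma gauss_lin (a b c : ℝ) (ha : 0 < a) :
    Integrable (fun x : ℝ => Real.exp (-a * x ^ 2 + b * x + c)) ∧
    ∫ x : ℝ, Real.exp (-a * x ^ 2 + b * x + c)
      = Real.sqrt (Real.pi / a) * Real.exp (b ^ 2 / (4 * a) + c) := by
  have key : (fun x : ℝ => Real.exp (-a * x ^ 2 + b * x + c))
      = fun x => Real.exp (b ^ 2 / (4 * a) + c) * Real.exp (-a * (x - b / (2 * a)) ^ 2) := by
    funext x
    rw [← Real.exp_add]
    congr 1
    field_simp
    ring
  constructor
  · rw [key]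
    exact (((integrable_exp_neg_mul_sq ha).comp_sub_right (b / (2 * a)))).const_mul _
  · rw [key, integral_const_mul,
      integral_sub_right_eq_self (fun y => Real.exp (-a * y ^ 2)) (b / (2 * a)),
      integral_gaussian]
    ring


lemma ratio_one_dim (lam mu ρ : ℝ) (hlam : 0 < lam) (hρl : lam ≤ ρ) (hρ1 : 1 ≤ ρ) :
    Integrable (fun x : ℝ =>
      ((Real.sqrt (2 * Real.pi * lam))⁻¹ * Real.exp (-(x - mu) ^ 2 / (2 * lam))) ^ 2 /
        ((Real.sqrt (2 * Real.pi * ρ))⁻¹ * Real.exp (-x ^ 2 / (2 * ρ)))) ∧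
    (∫ x : ℝ, ((Real.sqrt (2 * Real.pi * lam))⁻¹ * Real.exp (-(x - mu) ^ 2 / (2 * lam))) ^ 2 /
        ((Real.sqrt (2 * Real.pi * ρ))⁻¹ * Real.exp (-x ^ 2 / (2 * ρ))))
      = ρ / Real.sqrt (lam * (2 * ρ - lam)) * Real.exp (mu ^ 2 / (2 * ρ - lam)) := by
  have hρ : 0 < ρ := lt_of_lt_of_le one_pos hρ1
  have hπ := Real.pi_pos
  have h2ρ : 0 < 2 * ρ - lam := by linarith
  set a : ℝ := 1 / lam - 1 / (2 * ρ) with ha_def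
  have ha : 0 < a := by
    have h1 : 1 / (2 * ρ) < 1 / lam := one_div_lt_one_div_of_lt hlam (by linarith)
    simp only [ha_def]; linarith
  set b : ℝ := 2 * mu / lam with hb_def
  set c : ℝ := -(mu ^ 2) / lam with hc_def
  have hsA : Real.sqrt (2 * Real.pi * lam) ^ 2 = 2 * Real.pi * lam :=
    Real.sq_sqrt (by positivity)
  have hsApos : 0 < Real.sqrt (2 * Real.pi * lam) := Real.sqrt_pos.mpr (by positivity)
  have hsBpos : 0 < Real.sqrt (2 * Real.pi * ρ) := Real.sqrt_pos.mpr (by positivity)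
  have key : (fun x : ℝ =>
      ((Real.sqrt (2 * Real.pi * lam))⁻¹ * Real.exp (-(x - mu) ^ 2 / (2 * lam))) ^ 2 /
        ((Real.sqrt (2 * Real.pi * ρ))⁻¹ * Real.exp (-x ^ 2 / (2 * ρ))))
      = fun x => ((2 * Real.pi * lam)⁻¹ * Real.sqrt (2 * Real.pi * ρ)) *
          Real.exp (-a * x ^ 2 + b * x + c) := by
    funext x
    have hE2 : Real.exp (-x ^ 2 / (2 * ρ)) ≠ 0 := (Real.exp_pos _).ne'
    have harg : -a * x ^ 2 + b * x + c
        = (-(x - mu) ^ 2 / (2 * lam) + -(x - mu) ^ 2 / (2 * lam)) - (-x ^ 2 / (2 * ρ)) := by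
      simp only [ha_def, hb_def, hc_def]
      field_simp
      ring
    rw [harg, Real.exp_sub, Real.exp_add]
    rw [mul_pow, inv_pow, hsA]
    field_simp
  have hexp : b ^ 2 / (4 * a) + c = mu ^ 2 / (2 * ρ - lam) := by
    simp only [ha_def, hb_def, hc_def]
    field_simp
    ring
  have hpre : (2 * Real.pi * lam)⁻¹ * Real.sqrt (2 * Real.pi * ρ) * Real.sqrt (Real.pi / a)
      = ρ / Real.sqrt (lam * (2 * ρ - lam)) := by
    apply eq_of_sq_eq_sq' (by positivity) (by positivity)
    rw [mul_pow, mul_pow, Real.sq_sqrt (by positivity : (0:ℝ) ≤ 2 * Real.pi * ρ),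
      Real.sq_sqrt (le_of_lt (div_pos hπ ha)), div_pow,
      Real.sq_sqrt (by positivity : (0:ℝ) ≤ lam * (2 * ρ - lam)), inv_pow]
    simp only [ha_def]
    field_simp
  refine ⟨by rw [key]; exact (gauss_lin a b c ha).1.const_mul _, ?_⟩
  rw [key, integral_const_mul, (gauss_lin a b c ha).2, hexp, ← hpre]
  ring


lemma bd2 (lam mu : ℝ) (hlam : 0 < lam) :
    max 1 lam / Real.sqrt (lam * (2 * max 1 lam - lam)) *
      Real.exp (mu ^ 2 / (2 * max 1 lam - lam))
    ≤ Real.exp (2 * (mu ^ 2 / lam) + (1 / lam - 1) ^ 2) := by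
  set ρ := max 1 lam with hρ_def
  have hρ1 : (1:ℝ) ≤ ρ := le_max_left _ _
  have hρl : lam ≤ ρ := le_max_right _ _
  have h2 : 0 < 2 * ρ - lam := by linarith
  have hexp : mu ^ 2 / (2 * ρ - lam) ≤ 2 * (mu ^ 2 / lam) := by
    have h1 : mu ^ 2 / (2 * ρ - lam) ≤ mu ^ 2 / lam := by gcongr; linarith
    have h0 : 0 ≤ mu ^ 2 / lam := by positivity
    linarith
  have hpre : ρ / Real.sqrt (lam * (2 * ρ - lam)) ≤ Real.exp ((1 / lam - 1) ^ 2) := by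
    apply le_of_sq_le_sq' (by positivity) (Real.exp_pos _).le
    rw [div_pow, Real.sq_sqrt (by positivity : (0:ℝ) ≤ lam * (2 * ρ - lam))]
    have he : Real.exp ((1 / lam - 1) ^ 2) ^ 2 = Real.exp (2 * (1 / lam - 1) ^ 2) := by
      rw [pow_two, ← Real.exp_add]; ring_nf
    rw [he]
    have h3 : 1 + 2 * (1 / lam - 1) ^ 2 ≤ Real.exp (2 * (1 / lam - 1) ^ 2) := by
      have := Real.add_one_le_exp (2 * (1 / lam - 1) ^ 2); linarith
    refine le_trans ?_ h3
    rw [div_le_iff₀ (by positivity)]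
    have hq : (1 / lam - 1) * lam = 1 - lam := by field_simp
    rcases le_total lam 1 with hc | hc
    · have hρeq : ρ = 1 := max_eq_left hc
      rw [hρeq]
      have hq2 : (1 / lam - 1) ^ 2 * lam ^ 2 = (1 - lam) ^ 2 := by
        rw [← mul_pow, hq]
      nlinarith [hq2, hlam, sq_nonneg (1 / lam - 1),
        mul_nonneg (sq_nonneg (1 - lam)) (by linarith : (0:ℝ) ≤ 2 - lam),
        mul_nonneg (mul_nonneg (by linarith : (0:ℝ) ≤ 1 - lam) (by linarith : (0:ℝ) ≤ 1 - lam)) (by linarith : (0:ℝ) ≤ 1 - lam)]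
    · have hρeq : ρ = lam := max_eq_right hc
      rw [hρeq]
      nlinarith [sq_nonneg (1 / lam - 1), hq]
  calc ρ / Real.sqrt (lam * (2 * ρ - lam)) * Real.exp (mu ^ 2 / (2 * ρ - lam))
      ≤ Real.exp ((1 / lam - 1) ^ 2) * Real.exp (2 * (mu ^ 2 / lam)) :=
        mul_le_mul hpre (Real.exp_le_exp.mpr hexp) (Real.exp_pos _).le (Real.exp_pos _).le
    _ = Real.exp (2 * (mu ^ 2 / lam) + (1 / lam - 1) ^ 2) := by
        rw [← Real.exp_add]; ring_nf

lemma bd1 (lam M : ℝ) (hlam : 0 < lam) (hM1 : 1 ≤ M) (hMl : lam ≤ M) :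
    max 1 lam / Real.sqrt (1 * (2 * max 1 lam - 1)) *
      Real.exp (0 ^ 2 / (2 * max 1 lam - 1))
    ≤ Real.exp (1 / 2 * M * (1 / lam - 1) ^ 2) := by
  set ρ := max 1 lam with hρ_def
  have hρ1 : (1:ℝ) ≤ ρ := le_max_left _ _
  have hρl : lam ≤ ρ := le_max_right _ _
  have h2 : 0 < 2 * ρ - 1 := by linarith
  rw [show (0:ℝ) ^ 2 / (2 * ρ - 1) = 0 by ring, Real.exp_zero, mul_one, one_mul]
  apply le_of_sq_le_sq' (by positivity) (Real.exp_pos _).le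
  rw [div_pow, Real.sq_sqrt h2.le]
  have he : Real.exp (1 / 2 * M * (1 / lam - 1) ^ 2) ^ 2
      = Real.exp (M * (1 / lam - 1) ^ 2) := by
    rw [pow_two, ← Real.exp_add]; ring_nf
  rw [he]
  have h3 : 1 + M * (1 / lam - 1) ^ 2 ≤ Real.exp (M * (1 / lam - 1) ^ 2) := by
    have := Real.add_one_le_exp (M * (1 / lam - 1) ^ 2); linarith
  refine le_trans ?_ h3
  rw [div_le_iff₀ h2]
  have hq : (1 / lam - 1) * lam = 1 - lam := by field_simp
  have ht : 0 ≤ (1 / lam - 1) ^ 2 := sq_nonneg _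
  rcases le_total lam 1 with hc | hc
  · have hρeq : ρ = 1 := max_eq_left hc
    rw [hρeq]
    nlinarith [mul_nonneg (by linarith : (0:ℝ) ≤ M) ht]
  · have hρeq : ρ = lam := max_eq_right hc
    rw [hρeq]
    have hMt : lam * (1 / lam - 1) ^ 2 ≤ M * (1 / lam - 1) ^ 2 := by
      apply mul_le_mul_of_nonneg_right hMl ht
    nlinarith [hq, hMt, sq_nonneg (lam - 1),
      mul_nonneg (mul_nonneg (by linarith : (0:ℝ) ≤ lam - 1) (by linarith : (0:ℝ) ≤ lam - 1)) (by linarith : (0:ℝ) ≤ lam - 1)]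


theorem chi_squared_common_gaussian (d : ℕ) (μ l : Fin d → ℝ) (hl : ∀ i, 0 < l i) :
    let f₁ : (Fin d → ℝ) → ℝ := fun x =>
      ∏ i, (Real.sqrt (2 * Real.pi))⁻¹ * Real.exp (-(x i) ^ 2 / 2)
    let f₂ : (Fin d → ℝ) → ℝ := fun x =>
      ∏ i, (Real.sqrt (2 * Real.pi * l i))⁻¹ * Real.exp (-(x i - μ i) ^ 2 / (2 * l i))
    let g : (Fin d → ℝ) → ℝ := fun x =>
      ∏ i, (Real.sqrt (2 * Real.pi * max 1 (l i)))⁻¹ *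
        Real.exp (-(x i) ^ 2 / (2 * max 1 (l i)))
    (Integrable (fun x => (f₂ x) ^ 2 / g x) ∧
      (∫ x, (f₂ x) ^ 2 / g x) - 1 ≤
        Real.exp (2 * ∑ i, (μ i) ^ 2 / l i + ∑ i, (1 / l i - 1) ^ 2) - 1) ∧
    (Integrable (fun x => (f₁ x) ^ 2 / g x) ∧
      (∫ x, (f₁ x) ^ 2 / g x) - 1 ≤
        Real.exp ((1 / 2) * max 1 (⨆ i, l i) * ∑ i, (1 / l i - 1) ^ 2) - 1) := by
  intro f₁ f₂ g
  have hρ1 : ∀ i, (1:ℝ) ≤ max 1 (l i) := fun i => le_max_left _ _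
  have hρl : ∀ i, l i ≤ max 1 (l i) := fun i => le_max_right _ _
  set M : ℝ := max 1 (⨆ i, l i) with hM_def
  have hM1 : (1:ℝ) ≤ M := le_max_left _ _
  have hMl : ∀ i, l i ≤ M := fun i =>
    le_trans (le_ciSup (Set.Finite.bddAbove (Set.finite_range l)) i) (le_max_right _ _)
  -- f₂ part
  have key2 := fun i => ratio_one_dim (l i) (μ i) (max 1 (l i)) (hl i) (hρl i) (hρ1 i)
  have rw2 : (fun x : Fin d → ℝ => f₂ x ^ 2 / g x)
      = fun x => ∏ i, (((Real.sqrt (2 * Real.pi * l i))⁻¹ *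
          Real.exp (-(x i - μ i) ^ 2 / (2 * l i))) ^ 2 /
          ((Real.sqrt (2 * Real.pi * max 1 (l i)))⁻¹ *
            Real.exp (-(x i) ^ 2 / (2 * max 1 (l i))))) := by
    funext x
    simp only [f₂, g]
    rw [Finset.prod_div_distrib, Finset.prod_pow]
  have int2 : Integrable (fun x : Fin d → ℝ => f₂ x ^ 2 / g x) := by
    rw [rw2]; exact Integrable.fintype_prod (fun i => (key2 i).1)
  have val2 : (∫ x : Fin d → ℝ, f₂ x ^ 2 / g x)
      = ∏ i, (max 1 (l i) / Real.sqrt (l i * (2 * max 1 (l i) - l i)) *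
          Real.exp ((μ i) ^ 2 / (2 * max 1 (l i) - l i))) := by
    rw [rw2, integral_fin_nat_prod_volume_eq_prod
      (f := fun i (t : ℝ) => ((Real.sqrt (2 * Real.pi * l i))⁻¹ *
          Real.exp (-(t - μ i) ^ 2 / (2 * l i))) ^ 2 /
          ((Real.sqrt (2 * Real.pi * max 1 (l i)))⁻¹ *
            Real.exp (-t ^ 2 / (2 * max 1 (l i)))))]
    exact Finset.prod_congr rfl fun i _ => (key2 i).2
  have bnd2 : (∏ i, (max 1 (l i) / Real.sqrt (l i * (2 * max 1 (l i) - l i)) *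
          Real.exp ((μ i) ^ 2 / (2 * max 1 (l i) - l i))))
      ≤ Real.exp (2 * ∑ i, (μ i) ^ 2 / l i + ∑ i, (1 / l i - 1) ^ 2) := by
    calc (∏ i, (max 1 (l i) / Real.sqrt (l i * (2 * max 1 (l i) - l i)) *
          Real.exp ((μ i) ^ 2 / (2 * max 1 (l i) - l i))))
        ≤ ∏ i, Real.exp (2 * ((μ i) ^ 2 / l i) + (1 / l i - 1) ^ 2) :=
          Finset.prod_le_prod (fun i _ => by positivity)
            (fun i _ => bd2 (l i) (μ i) (hl i))
      _ = Real.exp (∑ i, (2 * ((μ i) ^ 2 / l i) + (1 / l i - 1) ^ 2)) :=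
          (Real.exp_sum _ _).symm
      _ = Real.exp (2 * ∑ i, (μ i) ^ 2 / l i + ∑ i, (1 / l i - 1) ^ 2) := by
          rw [Finset.sum_add_distrib, ← Finset.mul_sum]
  -- f₁ part
  have key1 := fun i : Fin d =>
    ratio_one_dim 1 0 (max 1 (l i)) one_pos (hρ1 i) (hρ1 i)
  have rw1 : (fun x : Fin d → ℝ => f₁ x ^ 2 / g x)
      = fun x => ∏ i, (((Real.sqrt (2 * Real.pi * 1))⁻¹ *
          Real.exp (-(x i - 0) ^ 2 / (2 * 1))) ^ 2 /
          ((Real.sqrt (2 * Real.pi * max 1 (l i)))⁻¹ *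
            Real.exp (-(x i) ^ 2 / (2 * max 1 (l i))))) := by
    funext x
    simp only [f₁, g, mul_one, sub_zero]
    rw [Finset.prod_div_distrib, Finset.prod_pow]
  have int1 : Integrable (fun x : Fin d → ℝ => f₁ x ^ 2 / g x) := by
    rw [rw1]; exact Integrable.fintype_prod (fun i => (key1 i).1)
  have val1 : (∫ x : Fin d → ℝ, f₁ x ^ 2 / g x)
      = ∏ i, (max 1 (l i) / Real.sqrt (1 * (2 * max 1 (l i) - 1)) *
          Real.exp ((0:ℝ) ^ 2 / (2 * max 1 (l i) - 1))) := by
    rw [rw1, integral_fin_nat_prod_volume_eq_prod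
      (f := fun i (t : ℝ) => ((Real.sqrt (2 * Real.pi * 1))⁻¹ *
          Real.exp (-(t - 0) ^ 2 / (2 * 1))) ^ 2 /
          ((Real.sqrt (2 * Real.pi * max 1 (l i)))⁻¹ *
            Real.exp (-t ^ 2 / (2 * max 1 (l i)))))]
    exact Finset.prod_congr rfl fun i _ => (key1 i).2
  have bnd1 : (∏ i, (max 1 (l i) / Real.sqrt (1 * (2 * max 1 (l i) - 1)) *
          Real.exp ((0:ℝ) ^ 2 / (2 * max 1 (l i) - 1))))
      ≤ Real.exp (1 / 2 * M * ∑ i, (1 / l i - 1) ^ 2) := by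
    calc (∏ i, (max 1 (l i) / Real.sqrt (1 * (2 * max 1 (l i) - 1)) *
          Real.exp ((0:ℝ) ^ 2 / (2 * max 1 (l i) - 1))))
        ≤ ∏ i, Real.exp (1 / 2 * M * (1 / l i - 1) ^ 2) :=
          Finset.prod_le_prod (fun i _ => by positivity)
            (fun i _ => bd1 (l i) M (hl i) hM1 (hMl i))
      _ = Real.exp (∑ i, 1 / 2 * M * (1 / l i - 1) ^ 2) := (Real.exp_sum _ _).symm
      _ = Real.exp (1 / 2 * M * ∑ i, (1 / l i - 1) ^ 2) := by rw [← Finset.mul_sum]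
  exact ⟨⟨int2, by rw [val2]; exact sub_le_sub_right bnd2 1⟩,
    ⟨int1, by rw [val1]; exact sub_le_sub_right bnd1 1⟩⟩
end
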